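/- Let H ∈ (1/2,1). There is a constant C_H depending only on H such that for all 0 < s < t and all δ ∈ (0,1]: |d(δ,s,t)| ≤ C_H δ s (t^{−1} + 1), where d(δ,s,t) := (t^{2H}/2) ϑ₁(δ/t) − ((t−s)^{2H}/2) ϑ₁(δ/(t−s)) and ϑ₁(x) := |1+x|^{2H} − 1 − |x|^{2H}. -/

import Mathlib

open Real Set

noncomputable section

/-- `ϑ₁(x) = |1+x|^{2H} − 1 − |x|^{2H}`. -/
def theta1 (H x : ℝ) : ℝ := |1 + x| ^ (2*H) - 1 - |x| ^ (2*H)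

/-- `d(δ,s,t) = (t^{2H}/2) ϑ₁(δ/t) − ((t−s)^{2H}/2) ϑ₁(δ/(t−s))`. -/
def dFn (H δ s t : ℝ) : ℝ :=
  t ^ (2*H) / 2 * theta1 H (δ / t) - (t - s) ^ (2*H) / 2 * theta1 H (δ / (t - s))

end

/-- Bernoulli-type bound for exponents in `(0,1]`. -/
lemma bern_small {p a δ : ℝ} (hp0 : 0 < p) (hp1 : p ≤ 1) (ha : 0 < a) (hδ : 0 ≤ δ) :
    (a + δ) ^ p - a ^ p ≤ p * δ * a ^ (p - 1) := by
  have h1 : (a + δ) ^ p = a ^ p * (1 + δ / a) ^ p := by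
    rw [← Real.mul_rpow ha.le (by have := div_nonneg hδ ha.le; linarith)]
    congr 1; field_simp
  have h2 : (1 + δ / a) ^ p ≤ 1 + p * (δ / a) :=
    rpow_one_add_le_one_add_mul_self (by have := div_nonneg hδ ha.le; linarith) hp0.le hp1
  have h3 : a ^ (p - 1) = a ^ p / a := by
    rw [Real.rpow_sub ha, Real.rpow_one]
  have hap : (0:ℝ) < a ^ p := Real.rpow_pos_of_pos ha p
  calc (a + δ) ^ p - a ^ p ≤ a ^ p * (1 + p * (δ / a)) - a ^ p := by
        rw [h1]; nlinarith
    _ = p * δ * (a ^ p / a) := by field_simp; ring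
    _ = p * δ * a ^ (p - 1) := by rw [h3]

/-- Bernoulli-type bound for exponents `≥ 1`. -/
lemma bern_big {p a δ : ℝ} (hp : 1 ≤ p) (ha : 0 < a) (hδ : 0 ≤ δ) :
    (a + δ) ^ p - a ^ p ≤ p * δ * (a + δ) ^ (p - 1) := by
  set b := a + δ with hb
  have hb0 : 0 < b := by positivity
  have h1 : a ^ p = b ^ p * (1 + (-(δ / b))) ^ p := by
    rw [← Real.mul_rpow hb0.le (by
      have : δ / b ≤ 1 := by rw [div_le_one hb0]; linarith
      linarith)]
    congr 1
    field_simp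
    rw [hb]; ring
  have h2 : 1 + p * (-(δ / b)) ≤ (1 + (-(δ / b))) ^ p := by
    apply one_add_mul_self_le_rpow_one_add _ hp
    have : δ / b ≤ 1 := by rw [div_le_one hb0]; linarith
    linarith
  have h3 : b ^ (p - 1) = b ^ p / b := by rw [Real.rpow_sub hb0, Real.rpow_one]
  have hbp : (0:ℝ) < b ^ p := Real.rpow_pos_of_pos hb0 p
  calc b ^ p - a ^ p ≤ b ^ p - b ^ p * (1 + p * (-(δ / b))) := by rw [h1]; nlinarith
    _ = p * δ * (b ^ p / b) := by field_simp; ring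
    _ = p * δ * b ^ (p - 1) := by rw [h3]

lemma expand_theta (H u δ : ℝ) (hu : 0 < u) (hδ : 0 < δ) :
    u ^ (2*H) / 2 * theta1 H (δ / u) = ((u + δ) ^ (2*H) - u ^ (2*H) - δ ^ (2*H)) / 2 := by
  have h1 : |1 + δ / u| = 1 + δ / u := abs_of_pos (by positivity)
  have h2 : |δ / u| = δ / u := abs_of_pos (by positivity)
  have h3 : (1 + δ / u) = (u + δ) / u := by field_simp
  have hup : (0:ℝ) < u ^ (2*H) := Real.rpow_pos_of_pos hu _
  rw [theta1, h1, h2, h3, Real.div_rpow (by positivity) hu.le,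
    Real.div_rpow hδ.le hu.le]
  field_simp

/-- `t^{2H-2} ≤ t⁻¹ + 1` for `t > 0`, `1/2 < H < 1`. -/
lemma rpow_2H2_le (H t : ℝ) (hH : H ∈ Set.Ioo (1/2 : ℝ) 1) (ht : 0 < t) :
    t ^ (2*H - 2) ≤ t⁻¹ + 1 := by
  obtain ⟨hH1, hH2⟩ := hH
  rcases le_total t 1 with h | h
  · have : t ^ (2*H - 2) ≤ t ^ (-1 : ℝ) :=
      Real.rpow_le_rpow_of_exponent_ge ht h (by linarith)
    rw [Real.rpow_neg_one] at this
    linarith [this, inv_nonneg.mpr ht.le]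
  · have : t ^ (2*H - 2) ≤ t ^ (0 : ℝ) :=
      Real.rpow_le_rpow_of_exponent_le h (by linarith)
    rw [Real.rpow_zero] at this
    have := inv_nonneg.mpr ht.le
    linarith

/-- For `H ∈ (1/2,1)` there is `C_H` such that, for all `0 < s < t` and
`δ ∈ (0,1]`, `|d(δ,s,t)| ≤ C_H δ s (t⁻¹ + 1)`. -/
theorem statement13 (H : ℝ) (hH : H ∈ Set.Ioo (1/2 : ℝ) 1) :
    ∃ C : ℝ, 0 < C ∧ ∀ s t δ : ℝ, 0 < s → s < t → 0 < δ → δ ≤ 1 →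
      |dFn H δ s t| ≤ C * δ * s * (t⁻¹ + 1) := by
  obtain ⟨hH1, hH2⟩ := hH
  refine ⟨4, by norm_num, fun s t δ hs hst hδ hδ1 => ?_⟩
  have ht : 0 < t := hs.trans hst
  set a := t - s with hadef
  have ha : 0 < a := by simp only [hadef]; linarith
  set φ : ℝ → ℝ := fun u => (u + δ) ^ (2*H) - u ^ (2*H) with hφ
  have hd : dFn H δ s t = (φ t - φ a) / 2 := by
    rw [dFn, expand_theta H t δ ht hδ, expand_theta H (t - s) δ (by linarith) hδ]
    simp only [hφ, ← hadef]
    ring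
  clear_value φ a
  -- nonnegativity and upper bound of φ on (0, t]
  have hφ_nonneg : ∀ u : ℝ, 0 < u → 0 ≤ φ u := by
    intro u hu
    simp only [hφ, sub_nonneg]
    exact Real.rpow_le_rpow hu.le (by linarith) (by linarith)
  have htinv : (0:ℝ) ≤ t⁻¹ := inv_nonneg.mpr ht.le
  rw [hd, abs_div, abs_two]
  rcases le_or_gt s (t / 2) with hcase | hcase
  · -- s ≤ t/2 : mean value theorem on [a, t]
    have hat2 : t / 2 ≤ a := by simp only [hadef]; linarith
    set C' : ℝ := 2*H * ((2*H - 1) * δ * a ^ (2*H - 2)) with hC'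
    set f' : ℝ → ℝ := fun u => 2*H * (u + δ) ^ (2*H - 1) - 2*H * u ^ (2*H - 1) with hf'
    have hderiv : ∀ u ∈ Icc a t, HasDerivWithinAt φ (f' u) (Icc a t) u := by
      intro u hu
      have hu0 : 0 < u := lt_of_lt_of_le ha hu.1
      have h1 : HasDerivAt (fun u : ℝ => (u + δ) ^ (2*H)) (2*H * (u + δ) ^ (2*H - 1)) u := by
        have hcomp := (Real.hasDerivAt_rpow_const (x := u + δ) (p := 2*H)
          (Or.inl (by positivity))).comp u ((hasDerivAt_id u).add_const δ)
        rw [mul_one] at hcomp; exact hcomp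
      have h2 : HasDerivAt (fun u : ℝ => u ^ (2*H)) (2*H * u ^ (2*H - 1)) u :=
        Real.hasDerivAt_rpow_const (Or.inl hu0.ne')
      have := (h1.sub h2).hasDerivWithinAt (s := Icc a t)
      simp only [hφ, hf']; exact this
    have hbound : ∀ u ∈ Ico a t, ‖f' u‖ ≤ C' := by
      intro u hu
      have hu0 : 0 < u := lt_of_lt_of_le ha hu.1
      have hmono : u ^ (2*H - 1) ≤ (u + δ) ^ (2*H - 1) :=
        Real.rpow_le_rpow hu0.le (by linarith) (by linarith)
      have hfnn : 0 ≤ f' u := by simp only [hf']; nlinarith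
      rw [Real.norm_eq_abs, abs_of_nonneg hfnn]
      have hb : (u + δ) ^ (2*H - 1) - u ^ (2*H - 1) ≤ (2*H - 1) * δ * u ^ (2*H - 1 - 1) :=
        bern_small (by linarith) (by linarith) hu0 hδ.le
      have hexp : (2*H - 1 - 1 : ℝ) = 2*H - 2 := by ring
      rw [hexp] at hb
      have hmono2 : u ^ (2*H - 2) ≤ a ^ (2*H - 2) :=
        Real.rpow_le_rpow_of_nonpos ha hu.1 (by linarith)
      have h2H1 : (0:ℝ) < 2*H - 1 := by linarith
      simp only [hf', hC']
      calc 2*H * (u + δ) ^ (2*H - 1) - 2*H * u ^ (2*H - 1)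
          = 2*H * ((u + δ) ^ (2*H - 1) - u ^ (2*H - 1)) := by ring
        _ ≤ 2*H * ((2*H - 1) * δ * u ^ (2*H - 2)) :=
            mul_le_mul_of_nonneg_left hb (by linarith)
        _ ≤ 2*H * ((2*H - 1) * δ * a ^ (2*H - 2)) := by
            apply mul_le_mul_of_nonneg_left _ (by linarith : (0:ℝ) ≤ 2*H)
            exact mul_le_mul_of_nonneg_left hmono2 (mul_nonneg h2H1.le hδ.le)
    have hmvt := norm_image_sub_le_of_norm_deriv_le_segment' hderiv hbound t
      (right_mem_Icc.mpr (by linarith))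
    rw [Real.norm_eq_abs] at hmvt
    have hts : t - a = s := by simp only [hadef]; ring
    rw [hts] at hmvt
    -- a^{2H-2} ≤ 2 * (t⁻¹ + 1)
    have hkey : a ^ (2*H - 2) ≤ 2 * (t⁻¹ + 1) := by
      have h1 : a ^ (2*H - 2) ≤ (t/2) ^ (2*H - 2) :=
        Real.rpow_le_rpow_of_nonpos (by linarith) hat2 (by linarith)
      have h2 : (t/2 : ℝ) ^ (2*H - 2) = t ^ (2*H - 2) / 2 ^ (2*H - 2) :=
        Real.div_rpow ht.le (by norm_num : (0:ℝ) ≤ 2) (2*H - 2)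
      have h3 : (1/2 : ℝ) ≤ 2 ^ (2*H - 2 : ℝ) := by
        have : (2:ℝ) ^ (-1 : ℝ) ≤ 2 ^ (2*H - 2 : ℝ) :=
          Real.rpow_le_rpow_of_exponent_le one_le_two (by linarith)
        rw [Real.rpow_neg_one] at this
        linarith
      have h4 : (0:ℝ) < 2 ^ (2*H - 2 : ℝ) := Real.rpow_pos_of_pos two_pos _
      have h5 : t ^ (2*H - 2) / 2 ^ (2*H - 2) ≤ 2 * t ^ (2*H - 2) := by
        rw [div_le_iff₀ h4]
        have htp : (0:ℝ) ≤ t ^ (2*H - 2) := (Real.rpow_pos_of_pos ht _).le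
        nlinarith
      have h6 : t ^ (2*H - 2) ≤ t⁻¹ + 1 := rpow_2H2_le H t ⟨hH1, hH2⟩ ht
      have htp : (0:ℝ) ≤ t ^ (2*H - 2) := (Real.rpow_pos_of_pos ht _).le
      nlinarith
    have hC'le : C' ≤ 4 * δ * (t⁻¹ + 1) := by
      have hap : (0:ℝ) ≤ a ^ (2*H - 2) := (Real.rpow_pos_of_pos ha _).le
      calc C' = (2*H * (2*H - 1)) * (δ * a ^ (2*H - 2)) := by rw [hC']; ring
        _ ≤ 2 * (δ * a ^ (2*H - 2)) :=
            mul_le_mul_of_nonneg_right (by nlinarith) (mul_nonneg hδ.le hap)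
        _ ≤ 2 * (δ * (2 * (t⁻¹ + 1))) := by
            apply mul_le_mul_of_nonneg_left _ (by norm_num : (0:ℝ) ≤ 2)
            exact mul_le_mul_of_nonneg_left hkey hδ.le
        _ = 4 * δ * (t⁻¹ + 1) := by ring
    have hfinal : |φ t - φ a| ≤ 4 * δ * (t⁻¹ + 1) * s :=
      hmvt.trans (mul_le_mul_of_nonneg_right hC'le hs.le)
    calc |φ t - φ a| / 2 ≤ 4 * δ * (t⁻¹ + 1) * s / 2 := by linarith
      _ ≤ 4 * δ * s * (t⁻¹ + 1) := by
          nlinarith [mul_nonneg (mul_nonneg hδ.le hs.le) htinv]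
  · -- t/2 < s : direct bound
    have hφbound : ∀ u : ℝ, 0 < u → u ≤ t → φ u ≤ 2*H * δ * (t + 1) := by
      intro u hu0 hut
      have hval : φ u = (u + δ) ^ (2*H) - u ^ (2*H) := by simp only [hφ]
      rw [hval]
      have h1 : (u + δ) ^ (2*H) - u ^ (2*H) ≤ 2*H * δ * (u + δ) ^ (2*H - 1) :=
        bern_big (by linarith) hu0 hδ.le
      have h2 : (u + δ) ^ (2*H - 1) ≤ t + 1 := by
        have ha1 : (u + δ) ^ (2*H - 1) ≤ (t + 1) ^ (2*H - 1) :=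
          Real.rpow_le_rpow (by linarith) (by linarith) (by linarith)
        have ha2 : (t + 1) ^ (2*H - 1) ≤ (t + 1) ^ (1:ℝ) :=
          Real.rpow_le_rpow_of_exponent_le (by linarith) (by linarith)
        rw [Real.rpow_one] at ha2
        linarith
      nlinarith [mul_pos hδ (by linarith : (0:ℝ) < 2*H)]
    have hbt : φ t ≤ 2*H * δ * (t + 1) := hφbound t ht le_rfl
    have hba : φ a ≤ 2*H * δ * (t + 1) := hφbound a ha (by simp only [hadef]; linarith)
    have hnn_t : 0 ≤ φ t := hφ_nonneg t ht
    have hnn_a : 0 ≤ φ a := hφ_nonneg a ha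
    have habs : |φ t - φ a| ≤ 2*H * δ * (t + 1) := by
      rw [abs_sub_le_iff]; constructor <;> linarith
    -- (t+1)/2 ≤ s * (t⁻¹ + 1)
    have hst2 : (t + 1) / 2 ≤ s * (t⁻¹ + 1) := by
      have h1 : (1:ℝ)/2 ≤ s * t⁻¹ := by
        rw [← div_eq_mul_inv, le_div_iff₀ ht]; linarith
      have h3 : s * (t⁻¹ + 1) = s * t⁻¹ + s := by ring
      linarith
    calc |φ t - φ a| / 2 ≤ 2*H * δ * ((t + 1) / 2) := by linarith
      _ ≤ 2*H * δ * (s * (t⁻¹ + 1)) :=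
          mul_le_mul_of_nonneg_left hst2 (mul_nonneg (by linarith) hδ.le)
      _ ≤ 4 * δ * (s * (t⁻¹ + 1)) := by
          have h4 : 2*H * δ ≤ 4 * δ := by nlinarith
          exact mul_le_mul_of_nonneg_right h4 (by positivity)
      _ = 4 * δ * s * (t⁻¹ + 1) := by ring
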